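/- Weighted divergence form of the phase equation (Euclidean version). Let Ω ⊆ ℝⁿ be open, ε > 0, and let u : Ω → ℝ^N be twice continuously differentiable with u(x) ≠ 0 for every x ∈ Ω, satisfying −Δu = ε^{-2}(1 − |u|²) u on Ω. Then v := u/|u| satisfies, at every point of Ω, Σ_{i=1}^{n} ∂_i(|u|² ∂_i v) = −|u|² |∇v|² v. In particular the vector field Σ_i ∂_i(|u|² ∂_i v) is parallel to v at every point, i.e. its component orthogonal to v vanishes. -/

import Mathlib

open MeasureTheory RealInnerProductSpace

/-- Partial derivative of `f` along the `i`-th standard coordinate direction. -/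
noncomputable def pd {n : ℕ} {F : Type*} [NormedAddCommGroup F] [NormedSpace ℝ F]
    (f : EuclideanSpace ℝ (Fin n) → F) (i : Fin n) (x : EuclideanSpace ℝ (Fin n)) : F :=
  fderiv ℝ f x (EuclideanSpace.single i 1)

/-- Componentwise Laplacian `Δf = Σ_i ∂_i ∂_i f`. -/
noncomputable def lap {n : ℕ} {F : Type*} [NormedAddCommGroup F] [NormedSpace ℝ F]
    (f : EuclideanSpace ℝ (Fin n) → F) (x : EuclideanSpace ℝ (Fin n)) : F :=
  ∑ i, pd (pd f i) i x

/-- The phase `v = u/|u|` of a nonvanishing map. -/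
noncomputable def phase {n N : ℕ}
    (u : EuclideanSpace ℝ (Fin n) → EuclideanSpace ℝ (Fin N))
    (x : EuclideanSpace ℝ (Fin n)) : EuclideanSpace ℝ (Fin N) :=
  ‖u x‖⁻¹ • u x

section Aux

variable {n N : ℕ} {u : EuclideanSpace ℝ (Fin n) → EuclideanSpace ℝ (Fin N)}
  {y : EuclideanSpace ℝ (Fin n)}

lemma aux1 (hd : DifferentiableAt ℝ u y) (h0 : u y ≠ 0) :
    HasFDerivAt (fun z => ‖u z‖)
      (‖u y‖⁻¹ • ((innerSL ℝ (u y)).comp (fderiv ℝ u y))) y := by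
  have h1 : HasFDerivAt (fun z => ‖u z‖ ^ 2)
      ((2 : ℕ) • (innerSL ℝ (u y)).comp (fderiv ℝ u y)) y := hd.hasFDerivAt.norm_sq
  have hsq : (‖u y‖ : ℝ) ^ 2 ≠ 0 := pow_ne_zero _ (norm_ne_zero_iff.2 h0)
  have h2 := h1.sqrt hsq
  have hfun : (fun z => Real.sqrt (‖u z‖ ^ 2)) = fun z => ‖u z‖ :=
    funext fun z => Real.sqrt_sq (norm_nonneg _)
  rw [hfun] at h2
  rw [Real.sqrt_sq (norm_nonneg _)] at h2
  refine h2.congr_fderiv ?_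
  ext w
  have h0' : ‖u y‖ ≠ 0 := norm_ne_zero_iff.2 h0
  simp [smul_smul]
  field_simp

lemma aux2 (hd : DifferentiableAt ℝ u y) (h0 : u y ≠ 0) :
    HasFDerivAt (phase u)
      (‖u y‖⁻¹ • fderiv ℝ u y +
        ((-(‖u y‖ ^ 2)⁻¹) • (‖u y‖⁻¹ • ((innerSL ℝ (u y)).comp (fderiv ℝ u y)))).smulRight
          (u y)) y := by
  have h0' : ‖u y‖ ≠ 0 := norm_ne_zero_iff.2 h0
  have hr := aux1 hd h0
  have hinv : HasFDerivAt (fun z => ‖u z‖⁻¹)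
      ((-(‖u y‖ ^ 2)⁻¹) • (‖u y‖⁻¹ • ((innerSL ℝ (u y)).comp (fderiv ℝ u y)))) y := by
    exact (hasDerivAt_inv h0').comp_hasFDerivAt y hr
  exact hinv.smul hd.hasFDerivAt

lemma aux3 (hd : DifferentiableAt ℝ u y) (h0 : u y ≠ 0) (i : Fin n) :
    pd (phase u) i y =
      ‖u y‖⁻¹ • pd u i y - ((‖u y‖ ^ 3)⁻¹ * ⟪u y, pd u i y⟫) • u y := by
  have h0' : ‖u y‖ ≠ 0 := norm_ne_zero_iff.2 h0
  simp only [pd]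
  rw [(aux2 hd h0).fderiv]
  simp only [ContinuousLinearMap.add_apply, ContinuousLinearMap.smul_apply,
    ContinuousLinearMap.smulRight_apply, ContinuousLinearMap.comp_apply, innerSL_apply_apply,
    smul_eq_mul, neg_smul, neg_mul]
  rw [sub_eq_add_neg, ← neg_smul, smul_smul]
  congr 1
  field_simp
  simp only [ContinuousLinearMap.smul_apply, ContinuousLinearMap.comp_apply, innerSL_apply_apply,
    smul_eq_mul]
  rw [← neg_smul]
  congr 1
  ring

lemma aux4 (hd : DifferentiableAt ℝ u y) (h0 : u y ≠ 0) (i : Fin n) :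
    ‖u y‖ ^ 2 • pd (phase u) i y =
      ‖u y‖ • pd u i y - (‖u y‖⁻¹ * ⟪u y, pd u i y⟫) • u y := by
  have h0' : ‖u y‖ ≠ 0 := norm_ne_zero_iff.2 h0
  rw [aux3 hd h0 i, smul_sub, smul_smul, smul_smul]
  congr 2
  · field_simp
  · field_simp

lemma aux5 {x : EuclideanSpace ℝ (Fin n)} (hcu : ContDiffAt ℝ 2 u x) (i : Fin n) :
    DifferentiableAt ℝ (pd u i) x := by
  have h := hcu.fderiv_right (m := 1) (by norm_num)
  have h2 : ContDiffAt ℝ 1 (fun z => (fderiv ℝ u z) (EuclideanSpace.single i 1)) x :=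
    h.clm_apply contDiffAt_const
  exact h2.differentiableAt one_ne_zero

lemma norm_phase (h0 : u y ≠ 0) : ‖phase u y‖ = 1 := by
  have h0' : ‖u y‖ ≠ 0 := norm_ne_zero_iff.2 h0
  rw [phase, norm_smul, norm_inv, norm_norm, inv_mul_cancel₀ h0']

end Aux

/-- Weighted divergence form of the phase equation (Euclidean version):
`Σ_i ∂_i(|u|² ∂_i v) = −|u|²|∇v|² v` on `Ω`, and in particular the component of
`Σ_i ∂_i(|u|² ∂_i v)` orthogonal to `v` vanishes. -/
theorem phase_equation_divergence_form {n N : ℕ}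
    (Ω : Set (EuclideanSpace ℝ (Fin n))) (hΩ : IsOpen Ω)
    (ε : ℝ) (hε : 0 < ε)
    (u : EuclideanSpace ℝ (Fin n) → EuclideanSpace ℝ (Fin N))
    (hu : ContDiffOn ℝ 2 u Ω)
    (hne : ∀ x ∈ Ω, u x ≠ 0)
    (hGL : ∀ x ∈ Ω, -lap u x = ((1 - ‖u x‖ ^ 2) / ε ^ 2) • u x) :
    ∀ x ∈ Ω,
      (∑ i, pd (fun y => ‖u y‖ ^ 2 • pd (phase u) i y) i x) =
        -((‖u x‖ ^ 2 * ∑ i, ‖pd (phase u) i x‖ ^ 2) • phase u x) ∧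
      (∑ i, pd (fun y => ‖u y‖ ^ 2 • pd (phase u) i y) i x) -
        ⟪(∑ i, pd (fun y => ‖u y‖ ^ 2 • pd (phase u) i y) i x), phase u x⟫ • phase u x
        = 0 := by
  intro x hx
  have hΩx : Ω ∈ nhds x := hΩ.mem_nhds hx
  have hcu : ContDiffAt ℝ 2 u x := hu.contDiffAt hΩx
  have hudx : DifferentiableAt ℝ u x := hcu.differentiableAt (by norm_num)
  have hud : ∀ y ∈ Ω, DifferentiableAt ℝ u y := fun y hy =>
    (hu.contDiffAt (hΩ.mem_nhds hy)).differentiableAt (by norm_num)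
  have h0x := hne x hx
  have hρ : ‖u x‖ ≠ 0 := norm_ne_zero_iff.2 h0x
  -- key pointwise derivative identity
  have key : ∀ i : Fin n, pd (fun y => ‖u y‖ ^ 2 • pd (phase u) i y) i x =
      ‖u x‖ • pd (pd u i) i x
        - (‖u x‖⁻¹ * ⟪u x, pd (pd u i) i x⟫ + ‖u x‖⁻¹ * ⟪pd u i x, pd u i x⟫
            - (‖u x‖ ^ 3)⁻¹ * ⟪u x, pd u i x⟫ ^ 2) • u x := by
    intro i
    have hr := aux1 hudx h0x
    have hinv : HasFDerivAt (fun z => ‖u z‖⁻¹)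
        ((-(‖u x‖ ^ 2)⁻¹) • (‖u x‖⁻¹ • ((innerSL ℝ (u x)).comp (fderiv ℝ u x)))) x :=
      (hasDerivAt_inv hρ).comp_hasFDerivAt x hr
    have hgd : DifferentiableAt ℝ (pd u i) x := aux5 hcu i
    have hA := hr.smul hgd.hasFDerivAt
    have hh := hudx.hasFDerivAt.inner ℝ hgd.hasFDerivAt
    have hB := (hinv.mul hh).smul hudx.hasFDerivAt
    have hAB := hA.sub hB
    have hev : (fun y => ‖u y‖ ^ 2 • pd (phase u) i y) =ᶠ[nhds x]
        fun y => ‖u y‖ • pd u i y - (‖u y‖⁻¹ * ⟪u y, pd u i y⟫) • u y :=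
      Filter.eventuallyEq_of_mem hΩx fun y hy => aux4 (hud y hy) (hne y hy) i
    rw [pd, hev.fderiv_eq, show fderiv ℝ (fun y => ‖u y‖ • pd u i y - (‖u y‖⁻¹ * ⟪u y, pd u i y⟫) • u y) x = _ from hAB.fderiv]
    simp only [ContinuousLinearMap.sub_apply, ContinuousLinearMap.add_apply,
      ContinuousLinearMap.smul_apply, ContinuousLinearMap.smulRight_apply,
      ContinuousLinearMap.comp_apply, ContinuousLinearMap.prod_apply, innerSL_apply_apply,
      fderivInnerCLM_apply, smul_eq_mul, Pi.mul_apply]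
    simp only [pd]
    match_scalars <;> field_simp <;> ring
  have hlap : lap u x = (-((1 - ‖u x‖ ^ 2) / ε ^ 2)) • u x := by
    rw [neg_smul, ← hGL x hx, neg_neg]
  have S1 : (∑ i, ⟪u x, pd (pd u i) i x⟫) = -((1 - ‖u x‖ ^ 2) / ε ^ 2) * ‖u x‖ ^ 2 := by
    rw [← inner_sum, show (∑ i, pd (pd u i) i x) = lap u x from rfl, hlap,
      real_inner_smul_right, real_inner_self_eq_norm_sq]
  have hV : ∀ i : Fin n, ‖pd (phase u) i x‖ ^ 2 =
      (‖u x‖ ^ 2)⁻¹ * ⟪pd u i x, pd u i x⟫ - (‖u x‖ ^ 4)⁻¹ * ⟪u x, pd u i x⟫ ^ 2 := by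
    intro i
    rw [← real_inner_self_eq_norm_sq, aux3 hudx h0x i]
    simp only [inner_sub_left, inner_sub_right, real_inner_smul_left, real_inner_smul_right]
    rw [real_inner_comm (pd u i x) (u x), real_inner_self_eq_norm_sq (u x)]
    field_simp
    ring
  have e1 : (∑ i, pd (fun y => ‖u y‖ ^ 2 • pd (phase u) i y) i x)
      = ‖u x‖ • lap u x
        - (‖u x‖⁻¹ * (∑ i, ⟪u x, pd (pd u i) i x⟫)
            + ‖u x‖⁻¹ * (∑ i, ⟪pd u i x, pd u i x⟫)
            - (‖u x‖ ^ 3)⁻¹ * (∑ i, ⟪u x, pd u i x⟫ ^ 2)) • u x := by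
    simp only [key]
    rw [Finset.sum_sub_distrib, ← Finset.sum_smul]
    congr 1
    · rw [lap, Finset.smul_sum]
    · congr 1
      rw [Finset.sum_sub_distrib, Finset.sum_add_distrib, Finset.mul_sum, Finset.mul_sum,
        Finset.mul_sum]
  have e2 : (∑ i, ‖pd (phase u) i x‖ ^ 2)
      = (‖u x‖ ^ 2)⁻¹ * (∑ i, ⟪pd u i x, pd u i x⟫)
        - (‖u x‖ ^ 4)⁻¹ * (∑ i, ⟪u x, pd u i x⟫ ^ 2) := by
    simp only [hV]
    rw [Finset.sum_sub_distrib, Finset.mul_sum, Finset.mul_sum]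
  have hfirst : (∑ i, pd (fun y => ‖u y‖ ^ 2 • pd (phase u) i y) i x) =
      -((‖u x‖ ^ 2 * ∑ i, ‖pd (phase u) i x‖ ^ 2) • phase u x) := by
    rw [e1, hlap, e2, S1, phase]
    match_scalars
    field_simp
    ring
  refine ⟨hfirst, ?_⟩
  rw [hfirst, ← neg_smul, real_inner_smul_left, real_inner_self_eq_norm_sq,
    norm_phase h0x]
  simp
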